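/- arXiv:2403.18900 — 2 statements merged into one kernel-verified Lean document; each statement's English description precedes it below -/
import Mathlib

section
/- The stabilizer nullity is additive under tensor products: for unit vectors $\ket{\psi} \in (\mathbb{C}^2)^{\otimes n}$ and $\ket{\phi} \in (\mathbb{C}^2)^{\otimes m}$, one has $|\mathrm{Stab}(\ket{\psi} \otimes \ket{\phi})| = |\mathrm{Stab}(\ket{\psi})| \cdot |\mathrm{Stab}(\ket{\phi})|$, hence $\nu(\ket{\psi} \otimes \ket{\phi}) = \nu(\ket{\psi}) + \nu(\ket{\phi})$. -/
open Matrix Complex Kronecker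

noncomputable section

def Xm : Matrix (Fin 2) (Fin 2) ℂ := !![0,1;1,0]
def Zm : Matrix (Fin 2) (Fin 2) ℂ := !![1,0;0,-1]

/-- Tensor product of single-qubit Paulis `X^(b i) * Z^(c i)` over the qubit index set `ι`. -/
def pauliString {ι : Type} [Fintype ι] [DecidableEq ι] (b c : ι → Fin 2) :
    Matrix (ι → Fin 2) (ι → Fin 2) ℂ :=
  Matrix.of fun x y => ∏ i, ((Xm ^ (b i : ℕ)) * (Zm ^ (c i : ℕ))) (x i) (y i)

/-- The Pauli group on qubits indexed by `ι`: phases `±1, ±i` times Pauli strings. -/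
def PauliGroup (ι : Type) [Fintype ι] [DecidableEq ι] : Set (Matrix (ι → Fin 2) (ι → Fin 2) ℂ) :=
  { P | ∃ ω : ℂ, ω ∈ ({1, -1, Complex.I, -Complex.I} : Set ℂ) ∧
      ∃ b c : ι → Fin 2, P = ω • pauliString b c }

/-- The stabilizer group of a state `ψ`. -/
def Stab {ι : Type} [Fintype ι] [DecidableEq ι] (ψ : (ι → Fin 2) → ℂ) :
    Set (Matrix (ι → Fin 2) (ι → Fin 2) ℂ) :=
  { P | P ∈ PauliGroup ι ∧ P.mulVec ψ = ψ }


/-- The tensor product of states on qubit sets `Fin n` and `Fin m`, as a state on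
qubits indexed by `Fin n ⊕ Fin m`. -/
def tensorState {n m : ℕ} (ψ : (Fin n → Fin 2) → ℂ) (φ : (Fin m → Fin 2) → ℂ) :
    ((Fin n ⊕ Fin m) → Fin 2) → ℂ :=
  fun x => ψ (fun i => x (Sum.inl i)) * φ (fun j => x (Sum.inr j))

/-! ### Auxiliary definitions and lemmas -/

def tensorMat {n m : ℕ} (P : Matrix (Fin n → Fin 2) (Fin n → Fin 2) ℂ)
    (Q : Matrix (Fin m → Fin 2) (Fin m → Fin 2) ℂ) :
    Matrix ((Fin n ⊕ Fin m) → Fin 2) ((Fin n ⊕ Fin m) → Fin 2) ℂ :=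
  Matrix.of fun x y => P (fun i => x (.inl i)) (fun i => y (.inl i)) *
    Q (fun j => x (.inr j)) (fun j => y (.inr j))

lemma tensorMat_smul_smul {n m : ℕ} (a b : ℂ) (P : Matrix (Fin n → Fin 2) (Fin n → Fin 2) ℂ)
    (Q : Matrix (Fin m → Fin 2) (Fin m → Fin 2) ℂ) :
    tensorMat (a • P) (b • Q) = (a * b) • tensorMat P Q := by
  ext x y
  simp [tensorMat]
  ring

lemma tensorMat_mulVec {n m : ℕ} (P : Matrix (Fin n → Fin 2) (Fin n → Fin 2) ℂ)
    (Q : Matrix (Fin m → Fin 2) (Fin m → Fin 2) ℂ) (ψ : (Fin n → Fin 2) → ℂ)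
    (φ : (Fin m → Fin 2) → ℂ) :
    (tensorMat P Q).mulVec (tensorState ψ φ) = tensorState (P.mulVec ψ) (Q.mulVec φ) := by
  funext x
  rw [Matrix.mulVec, dotProduct,
    ← (Equiv.sumArrowEquivProdArrow (Fin n) (Fin m) (Fin 2)).symm.sum_comp]
  simp only [Equiv.sumArrowEquivProdArrow, Equiv.coe_fn_symm_mk, Sum.elim_inl, Sum.elim_inr,
    tensorMat, tensorState, Matrix.of_apply, Matrix.mulVec, dotProduct, Fintype.sum_prod_type]
  rw [Finset.sum_mul_sum]
  exact Finset.sum_congr rfl fun a _ => Finset.sum_congr rfl fun b _ => by ring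

lemma single_sq (b c : Fin 2) :
    ((Xm ^ (b : ℕ)) * (Zm ^ (c : ℕ))) * ((Xm ^ (b : ℕ)) * (Zm ^ (c : ℕ)))
      = ((-1 : ℂ) ^ ((b : ℕ) * (c : ℕ))) • 1 := by
  fin_cases b <;> fin_cases c <;>
    simp [Xm, Zm] <;>
    · ext i j
      fin_cases i <;> fin_cases j <;>
        simp [Matrix.mul_apply, Fin.sum_univ_two, Matrix.one_apply]

lemma mem_mu4_iff (ω : ℂ) :
    ω ∈ ({1, -1, Complex.I, -Complex.I} : Set ℂ) ↔ ω ^ 4 = 1 := by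
  constructor
  · rintro (rfl | rfl | rfl | rfl) <;> simp [pow_succ, Complex.I_mul_I]
  · intro h
    simp only [Set.mem_insert_iff, Set.mem_singleton_iff]
    have h2 : (ω ^ 2 - 1) * (ω ^ 2 + 1) = 0 := by linear_combination h
    rcases mul_eq_zero.1 h2 with h3 | h3
    · have : (ω - 1) * (ω + 1) = 0 := by linear_combination h3
      rcases mul_eq_zero.1 this with h4 | h4
      · left; linear_combination h4
      · right; left; linear_combination h4
    · have : (ω - Complex.I) * (ω + Complex.I) = 0 := by
        linear_combination h3 - Complex.I_sq
      rcases mul_eq_zero.1 this with h4 | h4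
      · right; right; left; linear_combination h4
      · right; right; right; linear_combination h4

lemma pauliString_zero {ι : Type} [Fintype ι] [DecidableEq ι] :
    pauliString (ι := ι) 0 0 = 1 := by
  ext x y
  simp only [pauliString, Matrix.of_apply, Pi.zero_apply, Fin.val_zero, pow_zero, one_mul,
    Matrix.one_apply]
  by_cases h : x = y
  · subst h; simp [Matrix.one_apply]
  · obtain ⟨i, hi⟩ := Function.ne_iff.1 h
    rw [if_neg h]
    exact Finset.prod_eq_zero (Finset.mem_univ i) (by simp [Matrix.one_apply, hi])

lemma pauliString_mul_self {ι : Type} [Fintype ι] [DecidableEq ι] (b c : ι → Fin 2) :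
    ∃ ε : ℂ, ε ^ 2 = 1 ∧ pauliString b c * pauliString b c = ε • 1 := by
  refine ⟨∏ i, (-1 : ℂ) ^ ((b i : ℕ) * (c i : ℕ)), ?_, ?_⟩
  · rw [← Finset.prod_pow]
    refine Finset.prod_eq_one fun i _ => ?_
    rw [← pow_mul, pow_mul']
    simp
  · ext x y
    rw [Matrix.mul_apply]
    have key : ∀ z, (pauliString b c) x z * (pauliString b c) z y
        = ∏ i, (((Xm ^ (b i : ℕ)) * (Zm ^ (c i : ℕ))) (x i) (z i) *
            ((Xm ^ (b i : ℕ)) * (Zm ^ (c i : ℕ))) (z i) (y i)) := by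
      intro z
      simp only [pauliString, Matrix.of_apply]
      rw [← Finset.prod_mul_distrib]
    simp only [key]
    rw [← Fintype.piFinset_univ,
      ← Finset.prod_univ_sum (fun _ : ι => (Finset.univ : Finset (Fin 2)))
        (fun i k => ((Xm ^ (b i : ℕ)) * (Zm ^ (c i : ℕ))) (x i) k *
          ((Xm ^ (b i : ℕ)) * (Zm ^ (c i : ℕ))) k (y i))]
    have : ∀ i : ι, (∑ k : Fin 2, ((Xm ^ (b i : ℕ)) * (Zm ^ (c i : ℕ))) (x i) k *
        ((Xm ^ (b i : ℕ)) * (Zm ^ (c i : ℕ))) k (y i))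
        = ((-1 : ℂ) ^ ((b i : ℕ) * (c i : ℕ))) * (1 : Matrix (Fin 2) (Fin 2) ℂ) (x i) (y i) := by
      intro i
      have h1 := single_sq (b i) (c i)
      have h2 : ∀ u v : Fin 2,
          ((Xm ^ (b i : ℕ)) * (Zm ^ (c i : ℕ)) * ((Xm ^ (b i : ℕ)) * (Zm ^ (c i : ℕ)))) u v
          = (((-1 : ℂ) ^ ((b i : ℕ) * (c i : ℕ))) • (1 : Matrix (Fin 2) (Fin 2) ℂ)) u v := by
        rw [h1]; intro u v; rfl
      simpa [Matrix.mul_apply, Matrix.smul_apply, smul_eq_mul] using h2 (x i) (y i)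
    rw [Finset.prod_congr rfl fun i _ => this i, Finset.prod_mul_distrib]
    by_cases h : x = y
    · subst h; simp [Matrix.one_apply]
    · obtain ⟨i, hi⟩ := Function.ne_iff.1 h
      rw [Matrix.smul_apply, Matrix.one_apply, if_neg h]
      have : (1 : Matrix (Fin 2) (Fin 2) ℂ) (x i) (y i) = 0 := by
        simp [Matrix.one_apply, hi]
      rw [Finset.prod_eq_zero (f := fun i => (1 : Matrix (Fin 2) (Fin 2) ℂ) (x i) (y i))
        (Finset.mem_univ i) this, mul_zero, smul_zero]

lemma pauliString_sum {n m : ℕ} (b c : (Fin n ⊕ Fin m) → Fin 2) :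
    pauliString b c = tensorMat (pauliString (fun i => b (.inl i)) (fun i => c (.inl i)))
      (pauliString (fun j => b (.inr j)) (fun j => c (.inr j))) := by
  ext x y
  simp [pauliString, tensorMat, Fintype.prod_sum_type]

lemma split_tensor {α β : Type*} (u ψ' : α → ℂ) (v φ' : β → ℂ) (ω : ℂ)
    (h : ∀ a b, ω * (u a * v b) = ψ' a * φ' b) (a0 : α) (b0 : β)
    (ha : ψ' a0 ≠ 0) (hb : φ' b0 ≠ 0) :
    ∃ cc dd : ℂ, ω * (cc * dd) = 1 ∧ u = cc • ψ' ∧ v = dd • φ' := by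
  have h00 := h a0 b0
  have hω : ω ≠ 0 := by
    intro h0; rw [h0, zero_mul] at h00; exact mul_ne_zero ha hb h00.symm
  have hu0 : u a0 ≠ 0 := by
    intro h0; rw [h0, zero_mul, mul_zero] at h00; exact mul_ne_zero ha hb h00.symm
  have hv0 : v b0 ≠ 0 := by
    intro h0; rw [h0, mul_zero, mul_zero] at h00; exact mul_ne_zero ha hb h00.symm
  refine ⟨u a0 / ψ' a0, v b0 / φ' b0, ?_, ?_, ?_⟩
  · field_simp
    linear_combination h00
  · funext a
    have := h a b0
    simp only [Pi.smul_apply, smul_eq_mul]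
    field_simp
    have key : u a * ψ' a0 = ψ' a * u a0 :=
      mul_left_cancel₀ (mul_ne_zero hω hv0) (by linear_combination ψ' a0 * this - ψ' a * h00)
    linear_combination key
  · funext b
    have := h a0 b
    simp only [Pi.smul_apply, smul_eq_mul]
    field_simp
    have key : v b * φ' b0 = φ' b * v b0 :=
      mul_left_cancel₀ (mul_ne_zero hω hu0) (by linear_combination φ' b0 * this - φ' b * h00)
    linear_combination key

lemma pauliGroup_finite (ι : Type) [Fintype ι] [DecidableEq ι] : (PauliGroup ι).Finite := by
  have h : PauliGroup ι ⊆
      (fun p : ℂ × ((ι → Fin 2) × (ι → Fin 2)) => p.1 • pauliString p.2.1 p.2.2) ''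
        (({1, -1, Complex.I, -Complex.I} : Set ℂ) ×ˢ (Set.univ)) := by
    rintro P ⟨ω, hω, b, c, rfl⟩
    exact ⟨(ω, b, c), ⟨hω, trivial⟩, rfl⟩
  refine (Set.Finite.image _ (Set.Finite.prod ?_ Set.finite_univ)).subset h
  exact (((Set.finite_singleton _).insert _).insert _).insert _

lemma stab_finite {ι : Type} [Fintype ι] [DecidableEq ι] (ψ : (ι → Fin 2) → ℂ) :
    (Stab ψ).Finite :=
  (pauliGroup_finite ι).subset fun _ hP => hP.1

lemma one_mem_stab {ι : Type} [Fintype ι] [DecidableEq ι] (ψ : (ι → Fin 2) → ℂ) :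
    (1 : Matrix (ι → Fin 2) (ι → Fin 2) ℂ) ∈ Stab ψ := by
  refine ⟨⟨1, by left; rfl, 0, 0, by rw [pauliString_zero, one_smul]⟩, Matrix.one_mulVec ψ⟩

lemma exists_ne_zero {ι : Type} [Fintype ι] [DecidableEq ι] {ψ : (ι → Fin 2) → ℂ}
    (hψ : ∑ x, ‖ψ x‖ ^ 2 = 1) : ∃ a, ψ a ≠ 0 := by
  by_contra h
  push_neg at h
  simp only [h, norm_zero] at hψ
  norm_num at hψ

/-- Stabilizer nullity is additive under tensor products:
`|Stab(ψ ⊗ φ)| = |Stab ψ| ⋅ |Stab φ|`, hence `ν(ψ ⊗ φ) = ν(ψ) + ν(φ)`. -/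
theorem stmt12 (n m : ℕ) (ψ : (Fin n → Fin 2) → ℂ) (φ : (Fin m → Fin 2) → ℂ)
    (hψ : ∑ x, ‖ψ x‖ ^ 2 = 1) (hφ : ∑ x, ‖φ x‖ ^ 2 = 1) :
    (Stab (tensorState ψ φ)).ncard = (Stab ψ).ncard * (Stab φ).ncard ∧
    ((n + m : ℝ) - Real.logb 2 ((Stab (tensorState ψ φ)).ncard)) =
      ((n : ℝ) - Real.logb 2 ((Stab ψ).ncard)) +
      ((m : ℝ) - Real.logb 2 ((Stab φ).ncard)) := by
  obtain ⟨a0, ha0⟩ := exists_ne_zero hψ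
  obtain ⟨b0, hb0⟩ := exists_ne_zero hφ
  -- maps to
  have hmapsto : ∀ P1 ∈ Stab ψ, ∀ P2 ∈ Stab φ, tensorMat P1 P2 ∈ Stab (tensorState ψ φ) := by
    rintro P1 ⟨⟨ω1, hω1, b1, c1, rfl⟩, h1⟩ P2 ⟨⟨ω2, hω2, b2, c2, rfl⟩, h2⟩
    constructor
    · refine ⟨ω1 * ω2, ?_, Sum.elim b1 b2, Sum.elim c1 c2, ?_⟩
      · rw [mem_mu4_iff] at hω1 hω2 ⊢
        rw [mul_pow, hω1, hω2, one_mul]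
      · rw [tensorMat_smul_smul, pauliString_sum (Sum.elim b1 b2) (Sum.elim c1 c2)]
        rfl
    · rw [tensorMat_mulVec, h1, h2]
  -- surjective
  have hsurj : ∀ P ∈ Stab (tensorState ψ φ),
      ∃ P1 ∈ Stab ψ, ∃ P2 ∈ Stab φ, tensorMat P1 P2 = P := by
    rintro P ⟨⟨ω, hω, b, c, rfl⟩, hPv⟩
    set S1 := pauliString (fun i => b (.inl i)) (fun i => c (.inl i)) with hS1
    set S2 := pauliString (fun j => b (.inr j)) (fun j => c (.inr j)) with hS2
    have hPv' : ω • tensorState (S1.mulVec ψ) (S2.mulVec φ) = tensorState ψ φ := by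
      rw [← tensorMat_mulVec, ← Matrix.smul_mulVec, ← pauliString_sum]
      exact hPv
    have hco : ∀ a b', ω * ((S1.mulVec ψ) a * (S2.mulVec φ) b') = ψ a * φ b' := by
      intro a b'
      have := congrFun hPv' (Sum.elim a b')
      simpa [tensorState, smul_eq_mul] using this
    obtain ⟨cc, dd, hcd, hu, hv⟩ := split_tensor _ ψ _ φ ω hco a0 b0 ha0 hb0
    have hcc0 : cc ≠ 0 := by
      intro h; rw [h, zero_mul, mul_zero] at hcd; exact zero_ne_one hcd
    have hdd0 : dd ≠ 0 := by
      intro h; rw [h, mul_zero, mul_zero] at hcd; exact zero_ne_one hcd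
    -- fourth roots
    have sq_of : ∀ {ι : Type} [Fintype ι] [DecidableEq ι] (b' c' : ι → Fin 2)
        (χ : (ι → Fin 2) → ℂ) (e : ℂ) (x0 : ι → Fin 2), χ x0 ≠ 0 →
        (pauliString b' c').mulVec χ = e • χ → e ^ 4 = 1 := by
      intro ι _ _ b' c' χ e x0 hx0 he
      obtain ⟨ε, hε2, hSS⟩ := pauliString_mul_self b' c'
      have h2 : (pauliString b' c').mulVec ((pauliString b' c').mulVec χ) = ε • χ := by
        rw [Matrix.mulVec_mulVec, hSS, Matrix.smul_mulVec, Matrix.one_mulVec]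
      rw [he, Matrix.mulVec_smul, he, smul_smul] at h2
      have := congrFun h2 x0
      simp only [Pi.smul_apply, smul_eq_mul] at this
      have he2 : e * e = ε := mul_right_cancel₀ hx0 this
      calc e ^ 4 = (e * e) ^ 2 := by ring
      _ = 1 := by rw [he2, hε2]
    have hcc4 : cc ^ 4 = 1 := sq_of _ _ ψ cc a0 ha0 hu
    have hdd4 : dd ^ 4 = 1 := sq_of _ _ φ dd b0 hb0 hv
    refine ⟨cc⁻¹ • S1, ⟨⟨cc⁻¹, (mem_mu4_iff _).2 (by rw [inv_pow, hcc4, inv_one]), _, _, rfl⟩, ?_⟩,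
      dd⁻¹ • S2, ⟨⟨dd⁻¹, (mem_mu4_iff _).2 (by rw [inv_pow, hdd4, inv_one]), _, _, rfl⟩, ?_⟩, ?_⟩
    · rw [Matrix.smul_mulVec, hu, smul_smul, inv_mul_cancel₀ hcc0, one_smul]
    · rw [Matrix.smul_mulVec, hv, smul_smul, inv_mul_cancel₀ hdd0, one_smul]
    · rw [tensorMat_smul_smul, ← pauliString_sum]
      congr 1
      field_simp
      linear_combination -hcd
  -- injective
  have hinj : Set.InjOn (fun p : Matrix (Fin n → Fin 2) (Fin n → Fin 2) ℂ ×
      Matrix (Fin m → Fin 2) (Fin m → Fin 2) ℂ => tensorMat p.1 p.2)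
      ((Stab ψ) ×ˢ (Stab φ)) := by
    rintro ⟨P1, P2⟩ ⟨hP1, hP2⟩ ⟨Q1, Q2⟩ ⟨hQ1, hQ2⟩ heq
    simp only at heq
    have hpt : ∀ a a' bb bb', P1 a a' * P2 bb bb' = Q1 a a' * Q2 bb bb' := by
      intro a a' bb bb'
      have := congrFun (congrFun heq (Sum.elim a bb)) (Sum.elim a' bb')
      exact this
    have hfst : P1 = Q1 := by
      ext a a'
      refine mul_right_cancel₀ hb0 ?_
      have e1 : P1 a a' * (P2.mulVec φ) b0 = Q1 a a' * (Q2.mulVec φ) b0 := by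
        simp only [Matrix.mulVec, dotProduct, Finset.mul_sum]
        exact Finset.sum_congr rfl fun bb' _ => by
          rw [← mul_assoc, hpt a a' b0 bb', mul_assoc]
      rwa [hP2.2, hQ2.2] at e1
    have hsnd : P2 = Q2 := by
      obtain ⟨a', hA⟩ : ∃ a', P1 a0 a' ≠ 0 := by
        by_contra hh
        push_neg at hh
        have : (P1.mulVec ψ) a0 = 0 := by
          simp [Matrix.mulVec, dotProduct, hh]
        rw [hP1.2] at this
        exact ha0 this
      ext bb bb'
      have h1 := hpt a0 a' bb bb'
      rw [hfst] at h1 hA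
      exact mul_left_cancel₀ hA h1
    rw [hfst, hsnd]
  have hbij : Set.BijOn (fun p : Matrix (Fin n → Fin 2) (Fin n → Fin 2) ℂ ×
      Matrix (Fin m → Fin 2) (Fin m → Fin 2) ℂ => tensorMat p.1 p.2)
      ((Stab ψ) ×ˢ (Stab φ)) (Stab (tensorState ψ φ)) := by
    refine ⟨fun p hp => hmapsto p.1 hp.1 p.2 hp.2, hinj, fun P hP => ?_⟩
    obtain ⟨P1, h1, P2, h2, hPe⟩ := hsurj P hP
    exact ⟨(P1, P2), ⟨h1, h2⟩, hPe⟩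
  have hcard : (Stab (tensorState ψ φ)).ncard = (Stab ψ).ncard * (Stab φ).ncard := by
    calc (Stab (tensorState ψ φ)).ncard
        = Nat.card (Stab (tensorState ψ φ)) := (Nat.card_coe_set_eq _).symm
      _ = Nat.card ((Stab ψ) ×ˢ (Stab φ) : Set _) := (Nat.card_congr (hbij.equiv _)).symm
      _ = Nat.card ((Stab ψ) × (Stab φ) : Type) := Nat.card_congr (Equiv.Set.prod _ _)
      _ = Nat.card (Stab ψ) * Nat.card (Stab φ) := Nat.card_prod _ _
      _ = (Stab ψ).ncard * (Stab φ).ncard := by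
          rw [Nat.card_coe_set_eq, Nat.card_coe_set_eq]
  refine ⟨hcard, ?_⟩
  have hA : 0 < (Stab ψ).ncard :=
    (Set.ncard_pos (stab_finite ψ)).2 ⟨1, one_mem_stab ψ⟩
  have hB : 0 < (Stab φ).ncard :=
    (Set.ncard_pos (stab_finite φ)).2 ⟨1, one_mem_stab φ⟩
  rw [hcard]
  push_cast
  rw [Real.logb_mul (by exact_mod_cast hA.ne') (by exact_mod_cast hB.ne')]
  ring
end
end

section
/- The CCZ resource state $\ket{\mathrm{CCZ}} = \mathrm{CCZ}\,\ket{+}^{\otimes 3}$ has trivial Pauli stabilizer group, i.e., $\mathrm{Stab}(\ket{\mathrm{CCZ}}) = \{I\}$ and hence $\nu(\ket{\mathrm{CCZ}}) = 3$. -/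
open Matrix Complex Kronecker

noncomputable section

/-- The CCZ resource state `CCZ|+⟩^{⊗3}`: amplitude `-1/(2√2)` on `|111⟩` and
`1/(2√2)` elsewhere. -/
def CCZstate : (Fin 3 → Fin 2) → ℂ := fun x =>
  if x = fun _ => 1 then -((2 * Real.sqrt 2 : ℝ) : ℂ)⁻¹ else ((2 * Real.sqrt 2 : ℝ) : ℂ)⁻¹

lemma entry_eq (bi ci xi yi : Fin 2) :
    ((Xm ^ (bi : ℕ)) * (Zm ^ (ci : ℕ))) xi yi
      = if yi = xi + bi then ((-1 : ℂ)) ^ ((ci : ℕ) * (yi : ℕ)) else 0 := by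
  fin_cases bi <;> fin_cases ci <;> fin_cases xi <;> fin_cases yi <;>
    simp [Xm, Zm, pow_succ, Matrix.mul_apply, Fin.sum_univ_two]

/-- Sign of the Pauli string on row `x` (integer version). -/
def Eint (b c x : Fin 3 → Fin 2) : ℤ :=
  ∏ i, (-1 : ℤ) ^ ((c i : ℕ) * ((x i + b i : Fin 2) : ℕ))

/-- Sign of the CCZ state amplitude (integer version). -/
def Sint (x : Fin 3 → Fin 2) : ℤ := if x = (fun _ => 1) then -1 else 1

def tint (b c x : Fin 3 → Fin 2) : ℤ := Sint x * (Eint b c x * Sint (fun i => x i + b i))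

lemma pauliString_apply (b c x y : Fin 3 → Fin 2) :
    pauliString b c x y =
      if y = (fun i => x i + b i) then ((Eint b c x : ℤ) : ℂ) else 0 := by
  unfold pauliString Eint
  simp only [Matrix.of_apply]
  by_cases h : y = fun i => x i + b i
  · subst h
    simp only [if_pos rfl]
    push_cast
    refine Finset.prod_congr rfl fun i _ => ?_
    rw [entry_eq]
    simp
  · rw [if_neg h]
    obtain ⟨i, hi⟩ := Function.ne_iff.mp h
    refine Finset.prod_eq_zero (Finset.mem_univ i) ?_
    rw [entry_eq, if_neg hi]

lemma mulVec_pauli (b c : Fin 3 → Fin 2) (f : (Fin 3 → Fin 2) → ℂ) (x : Fin 3 → Fin 2) :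
    (pauliString b c).mulVec f x
      = ((Eint b c x : ℤ) : ℂ) * f (fun i => x i + b i) := by
  have h : (pauliString b c).mulVec f x = ∑ y, pauliString b c x y * f y := rfl
  rw [h, Finset.sum_eq_single (fun i => x i + b i)]
  · rw [pauliString_apply, if_pos rfl]
  · intro y _ hy
    rw [pauliString_apply, if_neg hy, zero_mul]
  · intro h; exact absurd (Finset.mem_univ _) h

lemma key : ∀ b c : Fin 3 → Fin 2,
    (∀ x, tint b c x = tint b c (fun _ => 0)) → b = (fun _ => 0) ∧ c = (fun _ => 0) := by
  decide

lemma Eint_sq (b c x : Fin 3 → Fin 2) : Eint b c x * Eint b c x = 1 := by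
  unfold Eint
  rw [← Finset.prod_mul_distrib]
  apply Finset.prod_eq_one
  intro i _
  rw [← pow_add]
  exact Even.neg_one_pow ⟨_, rfl⟩

lemma Sint_sq (x : Fin 3 → Fin 2) : Sint x * Sint x = 1 := by
  unfold Sint; split <;> norm_num

lemma CCZ_eq (x : Fin 3 → Fin 2) :
    CCZstate x = ((Sint x : ℤ) : ℂ) * ((2 * Real.sqrt 2 : ℝ) : ℂ)⁻¹ := by
  unfold CCZstate Sint
  split <;> push_cast <;> ring

lemma pauliString_eq_one :
    pauliString (fun _ => 0) (fun _ => 0) = (1 : Matrix (Fin 3 → Fin 2) (Fin 3 → Fin 2) ℂ) := by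
  ext x y
  rw [pauliString_apply, Matrix.one_apply]
  have hE : Eint (fun _ => 0) (fun _ => 0) x = 1 := by simp [Eint]
  have hx : (fun i => x i + 0) = x := by funext i; exact add_zero _
  rw [hE, hx]
  simp [eq_comm]

/-- `|CCZ⟩` has trivial Pauli stabilizer group, hence nullity 3. -/
theorem stmt16 :
    Stab CCZstate = {1} ∧ (3 : ℝ) - Real.logb 2 ((Stab CCZstate).ncard) = 3 := by
  have hα : ((2 * Real.sqrt 2 : ℝ) : ℂ)⁻¹ ≠ 0 := by
    apply inv_ne_zero
    rw [Complex.ofReal_ne_zero]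
    positivity
  have hstab : Stab CCZstate = {1} := by
    ext P
    constructor
    · rintro ⟨⟨ω, hω, b, c, rfl⟩, hst⟩
      have h1 : ∀ x, ω * (((Eint b c x : ℤ) : ℂ) * CCZstate (fun i => x i + b i))
          = CCZstate x := by
        intro x
        have h := congrFun hst x
        rwa [Matrix.smul_mulVec, Pi.smul_apply, mulVec_pauli, smul_eq_mul] at h
      have h3 : ∀ x, ω = ((tint b c x : ℤ) : ℂ) := by
        intro x
        have h := h1 x
        rw [CCZ_eq, CCZ_eq] at h
        have h2 : ω * (((Eint b c x * Sint (fun i => x i + b i) : ℤ)) : ℂ)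
            = ((Sint x : ℤ) : ℂ) := by
          apply mul_right_cancel₀ hα
          push_cast at h ⊢
          linear_combination h
        have hu : ((Eint b c x * Sint (fun i => x i + b i) : ℤ) : ℂ)
            * ((Eint b c x * Sint (fun i => x i + b i) : ℤ) : ℂ) = 1 := by
          rw [← Int.cast_mul]
          rw [mul_mul_mul_comm, Eint_sq, Sint_sq]
          norm_num
        have hune : ((Eint b c x * Sint (fun i => x i + b i) : ℤ) : ℂ) ≠ 0 := by
          intro h0
          rw [h0, zero_mul] at hu
          exact zero_ne_one hu
        have htc : ((tint b c x : ℤ) : ℂ) = ((Sint x : ℤ) : ℂ)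
            * ((Eint b c x * Sint (fun i => x i + b i) : ℤ) : ℂ) := by
          unfold tint; push_cast; ring
        rw [htc, ← h2, mul_assoc, hu, mul_one]
      have hconst : ∀ x, tint b c x = tint b c (fun _ => 0) := by
        intro x
        have := (h3 x).symm.trans (h3 (fun _ => 0))
        exact_mod_cast this
      obtain ⟨hb, hc⟩ := key b c hconst
      subst hb; subst hc
      have hω1 : ω = 1 := by
        have := h3 (fun _ => 0)
        have ht : tint (fun _ => 0) (fun _ => 0) (fun _ => 0) = 1 := by decide
        rw [ht] at this
        simpa using this
      rw [hω1, pauliString_eq_one, one_smul]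
      rfl
    · rintro rfl
      refine ⟨⟨1, by simp, fun _ => 0, fun _ => 0, by rw [pauliString_eq_one, one_smul]⟩,
        Matrix.one_mulVec _⟩
  refine ⟨hstab, ?_⟩
  rw [hstab, Set.ncard_singleton]
  simp

end
end
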